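/- arXiv:2505.14625 — 4 statements merged into one kernel-verified Lean document; each statement's English description precedes it below -/
import Mathlib

section
/- For every ε > 0 and every p ∈ (0,1), the derivatives of the GRPO advantage weights satisfy p·(ω⁺)′(p) − (1−p)·(ω⁻)′(p) = −(ω⁺(p) + ω⁻(p)). -/
/-- The GRPO advantage weight `ω⁺(p) = (1 - p) / (√(p(1-p)) + ε)`. -/
noncomputable def omegaPlus (ε p : ℝ) : ℝ := (1 - p) / (Real.sqrt (p * (1 - p)) + ε)

/-- The GRPO advantage weight `ω⁻(p) = p / (√(p(1-p)) + ε)`. -/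
noncomputable def omegaMinus (ε p : ℝ) : ℝ := p / (Real.sqrt (p * (1 - p)) + ε)

/-- For every `ε > 0` and every `p ∈ (0,1)`, the derivatives of the GRPO advantage
weights satisfy `p·(ω⁺)′(p) − (1−p)·(ω⁻)′(p) = −(ω⁺(p) + ω⁻(p))`. -/
theorem stmt1 (ε : ℝ) (hε : 0 < ε) (p : ℝ) (hp : p ∈ Set.Ioo (0 : ℝ) 1) :
    p * deriv (omegaPlus ε) p - (1 - p) * deriv (omegaMinus ε) p
      = -(omegaPlus ε p + omegaMinus ε p) := by
  obtain ⟨hp0, hp1⟩ := hp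
  have hsp : 0 < p * (1 - p) := by nlinarith
  have hs0 : 0 < Real.sqrt (p * (1 - p)) := Real.sqrt_pos.mpr hsp
  have hD : Real.sqrt (p * (1 - p)) + ε ≠ 0 := by positivity
  have h1 : HasDerivAt (fun x : ℝ => x * (1 - x)) (1 * (1 - p) + p * (0 - 1)) p :=
    (hasDerivAt_id p).mul ((hasDerivAt_const p 1).sub (hasDerivAt_id p))
  have hsd : HasDerivAt (fun x : ℝ => Real.sqrt (x * (1 - x)))
      ((1 * (1 - p) + p * (0 - 1)) / (2 * Real.sqrt (p * (1 - p)))) p :=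
    h1.sqrt hsp.ne'
  have hDd : HasDerivAt (fun x : ℝ => Real.sqrt (x * (1 - x)) + ε)
      ((1 * (1 - p) + p * (0 - 1)) / (2 * Real.sqrt (p * (1 - p)))) p :=
    hsd.add_const ε
  have hPlus : HasDerivAt (omegaPlus ε)
      (((0 - 1) * (Real.sqrt (p * (1 - p)) + ε) -
        (1 - p) * ((1 * (1 - p) + p * (0 - 1)) / (2 * Real.sqrt (p * (1 - p))))) /
        (Real.sqrt (p * (1 - p)) + ε) ^ 2) p :=
    ((hasDerivAt_const p 1).sub (hasDerivAt_id p)).div hDd hD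
  have hMinus : HasDerivAt (omegaMinus ε)
      ((1 * (Real.sqrt (p * (1 - p)) + ε) -
        p * ((1 * (1 - p) + p * (0 - 1)) / (2 * Real.sqrt (p * (1 - p))))) /
        (Real.sqrt (p * (1 - p)) + ε) ^ 2) p :=
    (hasDerivAt_id p).div hDd hD
  rw [hPlus.deriv, hMinus.deriv, omegaPlus, omegaMinus]
  field_simp
  ring
end

section
/- Fix ε > 0 and a ∈ ℝ. For every b ∈ (0,1), the weighted derivative combination appearing in the analysis of the GRPO learnability function satisfies ω⁺(b) + ω⁻(b) + a·(ω⁺)′(b) − (1−a)·(ω⁻)′(b) = (1−2b)(b−a) / (2√(b(1−b)) · (√(b(1−b)) + ε)²). -/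
/-- Fix `ε > 0` and `a ∈ ℝ`.  For every `b ∈ (0,1)`,
`ω⁺(b) + ω⁻(b) + a·(ω⁺)′(b) − (1−a)·(ω⁻)′(b)
  = (1−2b)(b−a) / (2√(b(1−b)) · (√(b(1−b)) + ε)²)`. -/
theorem stmt2 (ε : ℝ) (hε : 0 < ε) (a b : ℝ) (hb : b ∈ Set.Ioo (0 : ℝ) 1) :
    omegaPlus ε b + omegaMinus ε b + a * deriv (omegaPlus ε) b
        - (1 - a) * deriv (omegaMinus ε) b
      = (1 - 2 * b) * (b - a)
          / (2 * Real.sqrt (b * (1 - b)) * (Real.sqrt (b * (1 - b)) + ε) ^ 2) := by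
  obtain ⟨hb0, hb1⟩ := hb
  have hbb : 0 < b * (1 - b) := mul_pos hb0 (by linarith)
  set s := Real.sqrt (b * (1 - b)) with hsdef
  have hs0 : 0 < s := Real.sqrt_pos.mpr hbb
  have hsε : s + ε ≠ 0 := by positivity
  have hs2 : s ^ 2 = b * (1 - b) := Real.sq_sqrt hbb.le
  have hpoly : HasDerivAt (fun p : ℝ => p * (1 - p)) (1 - 2 * b) b := by
    have h : HasDerivAt (fun p : ℝ => p * (1 - p)) _ b := (hasDerivAt_id b).mul ((hasDerivAt_const b (1:ℝ)).sub (hasDerivAt_id b))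
    convert h using 1; simp [id]; ring
  have hsqrt : HasDerivAt (fun p : ℝ => Real.sqrt (p * (1 - p)))
      ((1 - 2 * b) / (2 * s)) b := hpoly.sqrt hbb.ne'
  have hden : HasDerivAt (fun p : ℝ => Real.sqrt (p * (1 - p)) + ε)
      ((1 - 2 * b) / (2 * s)) b := hsqrt.add_const ε
  have hplus : HasDerivAt (omegaPlus ε)
      (((-1) * (s + ε) - (1 - b) * ((1 - 2 * b) / (2 * s))) / (s + ε) ^ 2) b := by
    have h : HasDerivAt (omegaPlus ε) _ b := (((hasDerivAt_const b (1:ℝ)).sub (hasDerivAt_id b)).div hden hsε)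
    simpa [omegaPlus] using h
  have hminus : HasDerivAt (omegaMinus ε)
      ((1 * (s + ε) - b * ((1 - 2 * b) / (2 * s))) / (s + ε) ^ 2) b := by
    have h : HasDerivAt (omegaMinus ε) _ b := ((hasDerivAt_id b).div hden hsε)
    simpa [omegaMinus] using h
  rw [hplus.deriv, hminus.deriv]
  unfold omegaPlus omegaMinus
  rw [← hsdef]
  field_simp
  nlinarith [hs2, sq_nonneg s, sq_nonneg (s + ε), mul_pos hs0 hε]
end

section
/- Let μ be a probability measure on a measurable space and S a measurable set with μ(S) = P_ref ∈ (0,1). Fix ε > 0, β > 0, and for b ∈ (0,1) let π_b be the probability measure with density exp(u(b)·1_S − v(b)·1_{Sᶜ})/Z(b) with respect to μ. Then for every b ∈ (0,1), with q = π_b(S), one has q ∈ (0,1) and the reverse KL divergence between consecutive GRPO iterates satisfies D_KL(π_b ‖ π_q) = (1/β)·[ω⁺(b)·q − ω⁻(b)·(1−q)] − log(Z(b)/Z(q)). -/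
open MeasureTheory

/-- `u(p) = ω⁺(p)/β`. -/
noncomputable def uFun (ε β p : ℝ) : ℝ := omegaPlus ε p / β

/-- `v(p) = ω⁻(p)/β`. -/
noncomputable def vFun (ε β p : ℝ) : ℝ := omegaMinus ε p / β

/-- The normalizing constant `Z(p) = P_ref·exp(u(p)) + (1 − P_ref)·exp(−v(p))`. -/
noncomputable def ZFun (ε β Pref p : ℝ) : ℝ :=
  Pref * Real.exp (uFun ε β p) + (1 - Pref) * Real.exp (-vFun ε β p)

/-- The exponentially tilted policy `π_b`, with density
`exp(u(b)·1_S − v(b)·1_{Sᶜ}) / Z(b)` with respect to `μ`. -/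
noncomputable def tiltedPolicy {Ω : Type*} [MeasurableSpace Ω] (μ : Measure Ω) (S : Set Ω)
    (ε β Pref b : ℝ) : Measure Ω :=
  μ.withDensity fun x =>
    ENNReal.ofReal
      (Real.exp (uFun ε β b * S.indicator 1 x - vFun ε β b * Sᶜ.indicator 1 x)
        / ZFun ε β Pref b)

/-- The Kullback–Leibler divergence `D_KL(ν ‖ ρ) = ∫ log (dν/dρ) dν`. -/
noncomputable def klDiv {Ω : Type*} [MeasurableSpace Ω] (ν ρ : Measure Ω) : ℝ :=
  ∫ x, Real.log ((ν.rnDeriv ρ x).toReal) ∂ν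

/-- Auxiliary: the real-valued density of the tilted policy. -/
noncomputable def Fd {Ω : Type*} (S : Set Ω) (ε β Pref p : ℝ) (x : Ω) : ℝ :=
  Real.exp (uFun ε β p * S.indicator 1 x - vFun ε β p * Sᶜ.indicator 1 x)
    / ZFun ε β Pref p

lemma ZFun_pos {ε β Pref : ℝ} (h0 : 0 < Pref) (h1 : Pref < 1) (p : ℝ) :
    0 < ZFun ε β Pref p :=
  add_pos (mul_pos h0 (Real.exp_pos _)) (mul_pos (by linarith) (Real.exp_pos _))

lemma Fd_pos {Ω : Type*} {S : Set Ω} {ε β Pref : ℝ} (h0 : 0 < Pref) (h1 : Pref < 1)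
    (p : ℝ) (x : Ω) : 0 < Fd S ε β Pref p x :=
  div_pos (Real.exp_pos _) (ZFun_pos h0 h1 p)

lemma Fd_meas {Ω : Type*} [MeasurableSpace Ω] {S : Set Ω} (hS : MeasurableSet S)
    (ε β Pref p : ℝ) : Measurable (Fd S ε β Pref p) := by
  apply Measurable.div_const
  exact ((measurable_const.mul (measurable_one.indicator hS)).sub
    (measurable_const.mul (measurable_one.indicator hS.compl))).exp

lemma tilted_eq {Ω : Type*} [MeasurableSpace Ω] (μ : Measure Ω) (S : Set Ω)
    (ε β Pref p : ℝ) :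
    tiltedPolicy μ S ε β Pref p = μ.withDensity fun x => ENNReal.ofReal (Fd S ε β Pref p x) :=
  rfl

lemma tilted_apply_S {Ω : Type*} [MeasurableSpace Ω] (μ : Measure Ω) {S : Set Ω}
    (hS : MeasurableSet S) {Pref : ℝ} (h0 : 0 < Pref) (h1 : Pref < 1)
    (hμS : μ S = ENNReal.ofReal Pref) (ε β p : ℝ) :
    tiltedPolicy μ S ε β Pref p S
      = ENNReal.ofReal (Real.exp (uFun ε β p) / ZFun ε β Pref p * Pref) := by
  rw [tilted_eq, withDensity_apply _ hS]
  have h : ∀ᵐ x ∂μ, x ∈ S →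
      ENNReal.ofReal (Fd S ε β Pref p x)
        = ENNReal.ofReal (Real.exp (uFun ε β p) / ZFun ε β Pref p) := by
    refine ae_of_all _ fun x hx => ?_
    unfold Fd
    rw [Set.indicator_of_mem hx, Set.indicator_of_notMem (by simp [hx])]
    norm_num
  rw [setLIntegral_congr_fun_ae hS h, setLIntegral_const, hμS,
    ← ENNReal.ofReal_mul (div_nonneg (Real.exp_pos _).le (ZFun_pos h0 h1 p).le)]

lemma tilted_apply_compl {Ω : Type*} [MeasurableSpace Ω] (μ : Measure Ω)
    [IsProbabilityMeasure μ] {S : Set Ω}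
    (hS : MeasurableSet S) {Pref : ℝ} (h0 : 0 < Pref) (h1 : Pref < 1)
    (hμS : μ S = ENNReal.ofReal Pref) (ε β p : ℝ) :
    tiltedPolicy μ S ε β Pref p Sᶜ
      = ENNReal.ofReal (Real.exp (-vFun ε β p) / ZFun ε β Pref p * (1 - Pref)) := by
  rw [tilted_eq, withDensity_apply _ hS.compl]
  have h : ∀ᵐ x ∂μ, x ∈ Sᶜ →
      ENNReal.ofReal (Fd S ε β Pref p x)
        = ENNReal.ofReal (Real.exp (-vFun ε β p) / ZFun ε β Pref p) := by
    refine ae_of_all _ fun x hx => ?_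
    unfold Fd
    rw [Set.indicator_of_mem hx, Set.indicator_of_notMem (by simpa using hx)]
    norm_num
  have hμSc : μ Sᶜ = ENNReal.ofReal (1 - Pref) := by
    rw [measure_compl hS (measure_ne_top μ S), hμS, measure_univ,
      ENNReal.ofReal_sub _ (le_of_lt h0), ENNReal.ofReal_one]
  rw [setLIntegral_congr_fun_ae hS.compl h, setLIntegral_const, hμSc,
    ← ENNReal.ofReal_mul (div_nonneg (Real.exp_pos _).le (ZFun_pos h0 h1 p).le)]

lemma tilted_prob {Ω : Type*} [MeasurableSpace Ω] (μ : Measure Ω)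
    [IsProbabilityMeasure μ] {S : Set Ω}
    (hS : MeasurableSet S) {Pref : ℝ} (h0 : 0 < Pref) (h1 : Pref < 1)
    (hμS : μ S = ENNReal.ofReal Pref) (ε β p : ℝ) :
    IsProbabilityMeasure (tiltedPolicy μ S ε β Pref p) := by
  constructor
  have hsum := measure_add_measure_compl (μ := tiltedPolicy μ S ε β Pref p) hS
  rw [tilted_apply_S μ hS h0 h1 hμS ε β p, tilted_apply_compl μ hS h0 h1 hμS ε β p,
    ← ENNReal.ofReal_add
      (mul_nonneg (div_nonneg (Real.exp_pos _).le (ZFun_pos h0 h1 p).le) h0.le)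
      (mul_nonneg (div_nonneg (Real.exp_pos _).le (ZFun_pos h0 h1 p).le) (by linarith))] at hsum
  rw [← hsum]
  have hZ := ZFun_pos (ε := ε) (β := β) h0 h1 p
  have : Real.exp (uFun ε β p) / ZFun ε β Pref p * Pref
      + Real.exp (-vFun ε β p) / ZFun ε β Pref p * (1 - Pref) = 1 := by
    rw [div_mul_eq_mul_div, div_mul_eq_mul_div, ← add_div, div_eq_one_iff_eq hZ.ne']
    unfold ZFun; ring
  rw [this, ENNReal.ofReal_one]

/-- For every `b ∈ (0,1)`, with `q = π_b(S)`, one has `q ∈ (0,1)` and the reverse KL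
divergence between consecutive GRPO iterates satisfies
`D_KL(π_b ‖ π_q) = (1/β)·[ω⁺(b)·q − ω⁻(b)·(1−q)] − log(Z(b)/Z(q))`. -/
theorem stmt5 {Ω : Type*} [MeasurableSpace Ω] (μ : Measure Ω) [IsProbabilityMeasure μ]
    (S : Set Ω) (hS : MeasurableSet S) (Pref : ℝ) (hPref : Pref ∈ Set.Ioo (0 : ℝ) 1)
    (hμS : μ S = ENNReal.ofReal Pref)
    (ε β : ℝ) (hε : 0 < ε) (hβ : 0 < β)
    (b : ℝ) (hb : b ∈ Set.Ioo (0 : ℝ) 1)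
    (q : ℝ) (hq : q = (tiltedPolicy μ S ε β Pref b S).toReal) :
    q ∈ Set.Ioo (0 : ℝ) 1 ∧
      klDiv (tiltedPolicy μ S ε β Pref b) (tiltedPolicy μ S ε β Pref q)
        = (1 / β) * (omegaPlus ε b * q - omegaMinus ε b * (1 - q))
          - Real.log (ZFun ε β Pref b / ZFun ε β Pref q) := by
  obtain ⟨hP0, hP1⟩ := hPref
  have hZ : ∀ p : ℝ, 0 < ZFun ε β Pref p := fun p => ZFun_pos hP0 hP1 p
  have hqval : q = Real.exp (uFun ε β b) / ZFun ε β Pref b * Pref := by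
    rw [hq, tilted_apply_S μ hS hP0 hP1 hμS ε β b, ENNReal.toReal_ofReal
      (mul_nonneg (div_nonneg (Real.exp_pos _).le (hZ b).le) hP0.le)]
  have hq0 : 0 < q := by
    rw [hqval]; exact mul_pos (div_pos (Real.exp_pos _) (hZ b)) hP0
  have hq1 : q < 1 := by
    rw [hqval, div_mul_eq_mul_div, div_lt_one (hZ b)]
    have hZb : ZFun ε β Pref b
        = Pref * Real.exp (uFun ε β b) + (1 - Pref) * Real.exp (-vFun ε β b) := rfl
    nlinarith [Real.exp_pos (-vFun ε β b)]
  refine ⟨⟨hq0, hq1⟩, ?_⟩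
  haveI hPb : IsProbabilityMeasure (tiltedPolicy μ S ε β Pref b) :=
    tilted_prob μ hS hP0 hP1 hμS ε β b
  haveI hPq : IsProbabilityMeasure (tiltedPolicy μ S ε β Pref q) :=
    tilted_prob μ hS hP0 hP1 hμS ε β q
  have hFb := Fd_meas (S := S) hS ε β Pref b
  have hFq := Fd_meas (S := S) hS ε β Pref q
  have hr_meas : Measurable fun x => ENNReal.ofReal (Fd S ε β Pref b x / Fd S ε β Pref q x) :=
    (hFb.div hFq).ennreal_ofReal
  have hwd : tiltedPolicy μ S ε β Pref b
      = (tiltedPolicy μ S ε β Pref q).withDensity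
          (fun x => ENNReal.ofReal (Fd S ε β Pref b x / Fd S ε β Pref q x)) := by
    rw [tilted_eq, tilted_eq, ← withDensity_mul _ hFq.ennreal_ofReal hr_meas]
    congr 1
    funext x
    simp only [Pi.mul_apply]
    rw [← ENNReal.ofReal_mul (Fd_pos hP0 hP1 q x).le, mul_comm,
      div_mul_cancel₀ _ (Fd_pos hP0 hP1 q x).ne']
  have hac : tiltedPolicy μ S ε β Pref b ≪ tiltedPolicy μ S ε β Pref q := by
    rw [hwd]; exact withDensity_absolutelyContinuous _ _
  have hrn : (tiltedPolicy μ S ε β Pref b).rnDeriv (tiltedPolicy μ S ε β Pref q)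
      =ᵐ[tiltedPolicy μ S ε β Pref b]
        fun x => ENNReal.ofReal (Fd S ε β Pref b x / Fd S ε β Pref q x) := by
    have h1 := Measure.rnDeriv_withDensity (tiltedPolicy μ S ε β Pref q) hr_meas
    rw [← hwd] at h1
    exact h1.filter_mono hac.ae_le
  have hkl : klDiv (tiltedPolicy μ S ε β Pref b) (tiltedPolicy μ S ε β Pref q)
      = ∫ x, ((uFun ε β b - uFun ε β q) * S.indicator 1 x
          - (vFun ε β b - vFun ε β q) * Sᶜ.indicator 1 x
          - Real.log (ZFun ε β Pref b / ZFun ε β Pref q)) ∂(tiltedPolicy μ S ε β Pref b) := by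
    rw [klDiv]
    apply integral_congr_ae
    filter_upwards [hrn] with x hx
    rw [hx, ENNReal.toReal_ofReal (div_nonneg (Fd_pos hP0 hP1 b x).le (Fd_pos hP0 hP1 q x).le)]
    rw [Real.log_div (Fd_pos hP0 hP1 b x).ne' (Fd_pos hP0 hP1 q x).ne']
    unfold Fd
    rw [Real.log_div (Real.exp_ne_zero _) (hZ b).ne',
      Real.log_div (Real.exp_ne_zero _) (hZ q).ne',
      Real.log_exp, Real.log_exp, Real.log_div (hZ b).ne' (hZ q).ne']
    ring
  have hind1 : Integrable (fun x => (uFun ε β b - uFun ε β q) * S.indicator 1 x)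
      (tiltedPolicy μ S ε β Pref b) := by
    have he : (fun x => (uFun ε β b - uFun ε β q) * S.indicator 1 x)
        = S.indicator (fun _ => uFun ε β b - uFun ε β q) := by
      funext x; by_cases hx : x ∈ S <;> simp [hx]
    rw [he]; exact (integrable_const _).indicator hS
  have hind2 : Integrable (fun x => (vFun ε β b - vFun ε β q) * Sᶜ.indicator 1 x)
      (tiltedPolicy μ S ε β Pref b) := by
    have he : (fun x => (vFun ε β b - vFun ε β q) * Sᶜ.indicator 1 x)
        = Sᶜ.indicator (fun _ => vFun ε β b - vFun ε β q) := by
      funext x; by_cases hx : x ∈ Sᶜ <;> simp [hx]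
    rw [he]; exact (integrable_const _).indicator hS.compl
  have hcompl : ((tiltedPolicy μ S ε β Pref b) Sᶜ).toReal = 1 - q := by
    rw [prob_compl_eq_one_sub hS,
      ENNReal.toReal_sub_of_le prob_le_one ENNReal.one_ne_top, ENNReal.toReal_one, hq]
  have hind12 : Integrable (fun x => (uFun ε β b - uFun ε β q) * S.indicator 1 x
      - (vFun ε β b - vFun ε β q) * Sᶜ.indicator 1 x) (tiltedPolicy μ S ε β Pref b) :=
    hind1.sub hind2
  rw [hkl, integral_sub hind12 (integrable_const _),
    integral_sub hind1 hind2, integral_const_mul, integral_const_mul, integral_indicator_one hS,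
    integral_indicator_one hS.compl, integral_const, measureReal_def, measureReal_def,
    measureReal_def, measure_univ, hcompl, ← hq]
  have hid : uFun ε β q * q - vFun ε β q * (1 - q) = 0 := by
    unfold uFun vFun omegaPlus omegaMinus; ring
  have hub : uFun ε β b * q - vFun ε β b * (1 - q)
      = 1 / β * (omegaPlus ε b * q - omegaMinus ε b * (1 - q)) := by
    unfold uFun vFun; ring
  simp only [ENNReal.toReal_one, smul_eq_mul, one_mul]
  linarith
end

section
/- Fix ε > 0 and a ∈ ℝ. For every b with 1/2 < b < a, the weighted derivative combination satisfies ω⁺(b) + ω⁻(b) + a·(ω⁺)′(b) − (1−a)·(ω⁻)′(b) > 0 whenever b ∈ (0,1). -/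
lemma sqrt_hasDerivAt (b : ℝ) (hb0 : 0 < b) (hb1 : b < 1) :
    HasDerivAt (fun p : ℝ => Real.sqrt (p * (1 - p)))
      ((1 - 2 * b) / (2 * Real.sqrt (b * (1 - b)))) b := by
  have h : HasDerivAt (fun p : ℝ => p * (1 - p)) (1 - 2 * b) b := by
    have := (hasDerivAt_id' b).fun_mul ((hasDerivAt_id' b).const_sub (1:ℝ))
    exact this.congr_deriv (by ring)
  have hne : b * (1 - b) ≠ 0 := ne_of_gt (by nlinarith)
  exact h.sqrt hne

/-- Fix `ε > 0` and `a ∈ ℝ`.  For every `b` with `1/2 < b < a`, the weighted derivative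
combination satisfies `ω⁺(b) + ω⁻(b) + a·(ω⁺)′(b) − (1−a)·(ω⁻)′(b) > 0` whenever
`b ∈ (0,1)`. -/
theorem stmt15 (ε : ℝ) (hε : 0 < ε) (a b : ℝ) (hb2 : 1 / 2 < b) (hba : b < a)
    (hb : b ∈ Set.Ioo (0 : ℝ) 1) :
    0 < omegaPlus ε b + omegaMinus ε b + a * deriv (omegaPlus ε) b
        - (1 - a) * deriv (omegaMinus ε) b := by
  obtain ⟨hb0, hb1⟩ := hb
  set s := Real.sqrt (b * (1 - b)) with hs
  have hspos : 0 < s := Real.sqrt_pos.mpr (by nlinarith)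
  have hssq : s ^ 2 = b * (1 - b) := Real.sq_sqrt (by nlinarith)
  have hd : 0 < s + ε := by linarith
  have hdne : s + ε ≠ 0 := ne_of_gt hd
  have hS : HasDerivAt (fun p : ℝ => Real.sqrt (p * (1 - p)))
      ((1 - 2 * b) / (2 * s)) b := sqrt_hasDerivAt b hb0 hb1
  have hD : HasDerivAt (fun p : ℝ => Real.sqrt (p * (1 - p)) + ε)
      ((1 - 2 * b) / (2 * s)) b := hS.add_const ε
  have hP : HasDerivAt (omegaPlus ε)
      (((-1) * (s + ε) - (1 - b) * ((1 - 2 * b) / (2 * s))) / (s + ε) ^ 2) b := by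
    have hn : HasDerivAt (fun p : ℝ => 1 - p) (-1) b := by
      simpa using (hasDerivAt_id' b).const_sub (1:ℝ)
    exact hn.div hD hdne
  have hM : HasDerivAt (omegaMinus ε)
      ((1 * (s + ε) - b * ((1 - 2 * b) / (2 * s))) / (s + ε) ^ 2) b := by
    exact (hasDerivAt_id b).div hD hdne
  rw [hP.deriv, hM.deriv]
  rw [omegaPlus, omegaMinus]
  rw [← add_div]
  have key : (1 - b + b) / (s + ε)
      + a * (((-1) * (s + ε) - (1 - b) * ((1 - 2 * b) / (2 * s))) / (s + ε) ^ 2)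
      - (1 - a) * ((1 * (s + ε) - b * ((1 - 2 * b) / (2 * s))) / (s + ε) ^ 2)
      = (2 * b - 1) * (a - b) / (2 * s * (s + ε) ^ 2) := by
    field_simp
    ring
  rw [key]
  apply div_pos (by nlinarith) (by positivity)
end
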